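/- For every λ ∈ ℂ with |λ| < 1 and every natural number n, the diagonal matrix coefficients satisfy L(−n, −n) = λ^n and L(n, n) = conj(λ)^n. In particular, (1/(2πi))·∮_{|z|=1} (1/z)·((λ − z)/(1 − conj(λ)·z))^n dz = λ^n. -/

import Mathlib

/-- The matrix coefficient L(n,l) = (1/(2πi))·∮_{|z|=1} z^{l−n−1}·((1 − conj(λ)z)/(λ − z))^n dz
of the transfer operator of the circle map τ_λ(z) = z(λ − z)/(1 − conj(λ)z). -/
noncomputable def transferCoef (lam : ℂ) (n l : ℤ) : ℂ :=
  (1 / (2 * Real.pi * Complex.I)) *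
    ∮ z in C(0, 1), z ^ (l - n - 1) * ((1 - (starRingEnd ℂ) lam * z) / (lam - z)) ^ n

open Complex Metric in
/-- Cauchy's formula for the n-th power of a Blaschke factor: the mean over the unit circle
of z⁻¹·((μ−z)/(1−μ̄z))ⁿ equals 2πi·μⁿ. -/
lemma cauchy_key (μ : ℂ) (hμ : ‖μ‖ < 1) (n : ℕ) :
    (∮ z in C(0, 1), z⁻¹ * ((μ - z) / (1 - (starRingEnd ℂ) μ * z)) ^ n)
      = (2 * Real.pi * Complex.I) * μ ^ n := by
  set f : ℂ → ℂ := fun z => ((μ - z) / (1 - (starRingEnd ℂ) μ * z)) ^ n with hf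
  have hd : DifferentiableOn ℂ f (closedBall (0:ℂ) 1) := by
    apply DifferentiableOn.pow
    apply DifferentiableOn.div
    · exact ((differentiable_const μ).sub differentiable_id).differentiableOn
    · exact ((differentiable_const _).sub
        ((differentiable_const _).mul differentiable_id)).differentiableOn
    · intro z hz h
      have hz1 : ‖z‖ ≤ 1 := by
        simpa [Complex.dist_eq] using mem_closedBall.mp hz
      have hlt : ‖(starRingEnd ℂ) μ * z‖ < 1 := by
        rw [norm_mul, Complex.norm_conj]
        calc ‖μ‖ * ‖z‖ ≤ ‖μ‖ * 1 :=
              mul_le_mul_of_nonneg_left hz1 (norm_nonneg _)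
          _ < 1 := by simpa using hμ
      rw [sub_eq_zero] at h
      rw [← h] at hlt
      simp at hlt
  have hc : DiffContOnCl ℂ f (ball (0:ℂ) 1) :=
    DifferentiableOn.diffContOnCl (by rwa [closure_ball (0:ℂ) one_ne_zero])
  have := hc.circleIntegral_sub_inv_smul (mem_ball_self one_pos)
  simp only [sub_zero, smul_eq_mul] at this
  rw [this, hf]
  simp

open Complex Metric in
/-- The substitution θ ↦ 2π − θ (i.e. z ↦ z⁻¹ on the unit circle). -/
lemma subst_key (lam : ℂ) (n : ℕ) :
    (∮ z in C(0, 1), z⁻¹ * ((1 - (starRingEnd ℂ) lam * z) / (lam - z)) ^ n)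
      = ∮ z in C(0, 1), z⁻¹ * (((starRingEnd ℂ) lam - z) / (1 - lam * z)) ^ n := by
  set c := (starRingEnd ℂ) lam with hc
  simp only [circleIntegral, deriv_circleMap, smul_eq_mul]
  have key : ∀ θ : ℝ,
      circleMap 0 1 θ * Complex.I * ((circleMap 0 1 θ)⁻¹ *
        ((1 - c * circleMap 0 1 θ) / (lam - circleMap 0 1 θ)) ^ n)
      = (fun φ : ℝ => circleMap 0 1 φ * Complex.I * ((circleMap 0 1 φ)⁻¹ *
          ((c - circleMap 0 1 φ) / (1 - lam * circleMap 0 1 φ)) ^ n)) (2 * Real.pi - θ) := by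
    intro θ
    have hw : circleMap 0 1 θ ≠ 0 := circleMap_ne_center one_ne_zero
    set w := circleMap 0 1 θ with hwdef
    have hmap : circleMap 0 1 (2 * Real.pi - θ) = w⁻¹ := by
      simp only [circleMap, Complex.ofReal_sub, Complex.ofReal_mul, Complex.ofReal_ofNat,
        zero_add, one_mul, hwdef]
      rw [sub_mul, Complex.exp_sub, Complex.exp_two_pi_mul_I]
      simp [Complex.exp_neg, div_eq_mul_inv]
    simp only [hmap]
    have h1 : w * (c - w⁻¹) = -(1 - c * w) := by
      rw [mul_sub, mul_inv_cancel₀ hw]; ring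
    have h2 : w * (1 - lam * w⁻¹) = -(lam - w) := by
      rw [mul_sub, ← mul_assoc, mul_comm w lam, mul_assoc, mul_inv_cancel₀ hw]; ring
    rw [← mul_div_mul_left (c - w⁻¹) (1 - lam * w⁻¹) hw, h1, h2, neg_div_neg_eq, inv_inv]
    field_simp
  calc (∫ θ in (0:ℝ)..2 * Real.pi, circleMap 0 1 θ * Complex.I * ((circleMap 0 1 θ)⁻¹ *
        ((1 - c * circleMap 0 1 θ) / (lam - circleMap 0 1 θ)) ^ n))
      = ∫ θ in (0:ℝ)..2 * Real.pi, (fun φ : ℝ => circleMap 0 1 φ * Complex.I *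
          ((circleMap 0 1 φ)⁻¹ * ((c - circleMap 0 1 φ) / (1 - lam * circleMap 0 1 φ)) ^ n))
          (2 * Real.pi - θ) := by
        exact intervalIntegral.integral_congr fun θ _ => key θ
    _ = ∫ θ in (0:ℝ)..2 * Real.pi, circleMap 0 1 θ * Complex.I *
          ((circleMap 0 1 θ)⁻¹ * ((c - circleMap 0 1 θ) / (1 - lam * circleMap 0 1 θ)) ^ n) := by
        rw [intervalIntegral.integral_comp_sub_left (fun φ : ℝ => circleMap 0 1 φ * Complex.I *
          ((circleMap 0 1 φ)⁻¹ * ((c - circleMap 0 1 φ) / (1 - lam * circleMap 0 1 φ)) ^ n))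
          (2 * Real.pi)]
        norm_num

/-- For λ ∈ ℂ with |λ| < 1 and every natural number n, the diagonal coefficients satisfy
L(−n, −n) = λⁿ and L(n, n) = conj(λ)ⁿ; in particular
(1/(2πi))·∮_{|z|=1} (1/z)·((λ − z)/(1 − conj(λ)z))ⁿ dz = λⁿ. -/
theorem transferCoef_diagonal (lam : ℂ) (hlam : ‖lam‖ < 1) (n : ℕ) :
    transferCoef lam (-(n : ℤ)) (-(n : ℤ)) = lam ^ n ∧
    transferCoef lam (n : ℤ) (n : ℤ) = (starRingEnd ℂ) lam ^ n ∧
    (1 / (2 * Real.pi * Complex.I)) *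
        (∮ z in C(0, 1), z⁻¹ * ((lam - z) / (1 - (starRingEnd ℂ) lam * z)) ^ n) = lam ^ n := by
  have hne : (2 * (Real.pi : ℂ) * Complex.I) ≠ 0 := by
    simp [Real.pi_ne_zero, Complex.I_ne_zero, Complex.ofReal_ne_zero]
  have cancel : ∀ a : ℂ, (1 / (2 * (Real.pi : ℂ) * Complex.I)) *
      ((2 * (Real.pi : ℂ) * Complex.I) * a) = a := fun a => by
    rw [← mul_assoc, one_div, inv_mul_cancel₀ hne, one_mul]
  have h3 : (1 / (2 * Real.pi * Complex.I)) *
      (∮ z in C(0, 1), z⁻¹ * ((lam - z) / (1 - (starRingEnd ℂ) lam * z)) ^ n) = lam ^ n := by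
    rw [cauchy_key lam hlam n, cancel]
  refine ⟨?_, ?_, h3⟩
  · rw [transferCoef]
    have : (∮ z in C(0, 1), z ^ (-(n:ℤ) - -(n:ℤ) - 1) *
        ((1 - (starRingEnd ℂ) lam * z) / (lam - z)) ^ (-(n:ℤ)))
        = ∮ z in C(0, 1), z⁻¹ * ((lam - z) / (1 - (starRingEnd ℂ) lam * z)) ^ n := by
      refine circleIntegral.integral_congr (by norm_num) fun z _ => ?_
      have he : (-(n:ℤ) - -(n:ℤ) - 1) = -1 := by ring
      rw [he, zpow_neg_one, zpow_neg, zpow_natCast, ← inv_pow, inv_div]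
    rw [this]
    exact h3
  · rw [transferCoef]
    have : (∮ z in C(0, 1), z ^ ((n:ℤ) - (n:ℤ) - 1) *
        ((1 - (starRingEnd ℂ) lam * z) / (lam - z)) ^ ((n:ℤ)))
        = ∮ z in C(0, 1), z⁻¹ * ((1 - (starRingEnd ℂ) lam * z) / (lam - z)) ^ n := by
      refine circleIntegral.integral_congr (by norm_num) fun z _ => ?_
      have he : ((n:ℤ) - (n:ℤ) - 1) = -1 := by ring
      rw [he, zpow_neg_one, zpow_natCast]
    rw [this, subst_key lam n]
    have hconj : ‖(starRingEnd ℂ) lam‖ < 1 := by rwa [Complex.norm_conj]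
    have := cauchy_key ((starRingEnd ℂ) lam) hconj n
    rw [Complex.conj_conj] at this
    rw [this, cancel]
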